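/- arXiv:1611.09429 — 3 statements merged into one kernel-verified Lean document; each statement's English description precedes it below -/
import Mathlib

section
/- Let w ∈ ℂ with 0 < |w| < 1 and set q = w². For n ≥ 0 define α_n = w^{-2n²-2n}·(a_n(w) + a_n(-w)), where for x ≠ 0, a_n(x) = x^{3n²+2n}·(1 - x^{2n+1})/(1 - x²)·Σ_{j=-n}^{n} (-1)^j x^{-j²}, and define β_n = 2(-1)^n / ((w⁴;w⁴)_n · (1 - w^{4n+2})). Then for every n ≥ 0, β_n = Σ_{j=0}^{n} α_j / ((q;q)_{n-j} · (q²;q)_{n+j}), i.e. (α_n, β_n) is a Bailey pair relative to a = q in base q (here q = w², so (q²;q)_{n+j} = (w⁴;w²)_{n+j}). -/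
/-- Finite q-Pochhammer symbol `(x;q)_n = ∏_{i=0}^{n-1} (1 - x q^i)`. -/
noncomputable def qPoch (x q : ℂ) (n : ℕ) : ℂ :=
  ∏ i ∈ Finset.range n, (1 - x * q ^ i)

/-- `a_n(x) = x^{3n²+2n} (1 - x^{2n+1})/(1 - x²) · Σ_{j=-n}^{n} (-1)^j x^{-j²}`. -/
noncomputable def aFun (x : ℂ) (n : ℕ) : ℂ :=
  x ^ (3 * n ^ 2 + 2 * n) * (1 - x ^ (2 * n + 1)) / (1 - x ^ 2) *
    ∑ j ∈ Finset.Icc (-(n : ℤ)) (n : ℤ), (-1 : ℂ) ^ j * x ^ (-(j ^ 2))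

/-! ### Arithmetic of exponents -/

def ee (k : ℕ) : ℕ → ℕ
  | 0 => 0
  | d+1 => ee k d + (if d % 2 = 0 then 2*(k+d)+2 else 0)

def gg (k d : ℕ) : ℕ := if d % 2 = 0 then ee (k+1) d else ee k d

lemma ee_succ (k d : ℕ) : ee k (d+1) = ee k d + (if d % 2 = 0 then 2*(k+d)+2 else 0) := rfl

lemma ee_spec (k : ℕ) : ∀ d : ℕ, 2 * ee k d = d*(2*k+d) + (if d % 2 = 0 then 0 else 2*(k+d)+1)
  | 0 => by simp [ee]
  | d+1 => by
    have ih := ee_spec k d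
    have hexp : (d+1)*(2*k+(d+1)) = d*(2*k+d) + 2*k+2*d+1 := by ring
    rcases Nat.even_or_odd d with h | h
    · have h2 : d % 2 = 0 := Nat.even_iff.mp h
      have h3 : (d+1) % 2 = 1 := by omega
      rw [ee_succ, if_pos h2, if_neg (by omega : ¬ (d+1) % 2 = 0)]
      rw [if_pos h2] at ih
      omega
    · have h2 : d % 2 = 1 := Nat.odd_iff.mp h
      have h3 : (d+1) % 2 = 0 := by omega
      rw [ee_succ, if_neg (by omega : ¬ d % 2 = 0), if_pos h3]
      rw [if_neg (by omega : ¬ d % 2 = 0)] at ih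
      omega

lemma ee_shift (k : ℕ) : ∀ d : ℕ, ee (k+1) d = ee k d + d + d % 2
  | 0 => by simp [ee]
  | d+1 => by
    have ih := ee_shift k d
    rcases Nat.even_or_odd d with h | h
    · have h2 : d % 2 = 0 := Nat.even_iff.mp h
      rw [ee_succ, ee_succ, if_pos h2, if_pos h2]; omega
    · have h2 : d % 2 = 1 := Nat.odd_iff.mp h
      rw [ee_succ, ee_succ, if_neg (by omega : ¬ d % 2 = 0), if_neg (by omega : ¬ d % 2 = 0)]
      omega

lemma gg_even {d : ℕ} (k : ℕ) (hd : d % 2 = 0) : gg k d = ee (k+1) d := by simp [gg, hd]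
lemma gg_odd {d : ℕ} (k : ℕ) (hd : d % 2 = 1) : gg k d = ee k d := by
  simp only [gg, hd]; norm_num

lemma R1 {d : ℕ} (k : ℕ) (hd : d % 2 = 0) : ee k (d+1) = gg k d + (2*k+d+2) := by
  rw [gg_even k hd, ee_succ, if_pos hd, ee_shift]; omega
lemma R3 {d : ℕ} (k : ℕ) (hd : d % 2 = 0) : gg k (d+1) = gg k d + (2*k+d+2) := by
  rw [gg_even k hd, gg_odd k (by omega), ee_succ, if_pos hd, ee_shift]; omega
lemma R4 {d : ℕ} (k : ℕ) (hd : d % 2 = 1) : ee k (d+1) = gg k d := by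
  rw [gg_odd k hd, ee_succ, if_neg (by omega : ¬ d % 2 = 0)]; omega
lemma R5 {d : ℕ} (k : ℕ) (hd : d % 2 = 1) : ee (k+1) d = gg k d + (d+1) := by
  rw [gg_odd k hd, ee_shift]; omega
lemma R6 {d : ℕ} (k : ℕ) (hd : d % 2 = 1) : gg k (d+1) = gg k d + (d+1) := by
  rw [gg_odd k hd, gg_even k (by omega), ee_shift, ee_succ, if_neg (by omega : ¬ d % 2 = 0)]
  omega

lemma gg_zero (k : ℕ) : gg k 0 = 0 := by simp [gg, ee]
lemma ee_zero (k : ℕ) : ee k 0 = 0 := rfl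

/-! ### Products -/

/-- generic product `∏_{i<b} (1 - w^{2(a+i)})` -/
noncomputable def QT (w : ℂ) (a b : ℕ) : ℂ := ∏ i ∈ Finset.range b, (1 - w^(2*(a+i)))

noncomputable def Podd (w : ℂ) (n : ℕ) : ℂ := ∏ i ∈ Finset.range n, (1 - w^(4*i+2))

noncomputable def pk4 (w : ℂ) (n : ℕ) : ℂ := ∏ i ∈ Finset.range n, (1 - w^(4*i+4))

lemma QT_zero (w : ℂ) (a : ℕ) : QT w a 0 = 1 := by simp [QT]

lemma QT_succ_top (w : ℂ) (a b : ℕ) : QT w a (b+1) = QT w a b * (1 - w^(2*(a+b))) := by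
  simp [QT, Finset.prod_range_succ]

lemma QT_succ_bot (w : ℂ) (a b : ℕ) : QT w a (b+1) = (1 - w^(2*a)) * QT w (a+1) b := by
  rw [QT, Finset.prod_range_succ', mul_comm]
  congr 1
  apply Finset.prod_congr rfl
  intro i _
  congr 2
  omega

lemma QT_ne (w : ℂ) (hne : ∀ m : ℕ, 1 ≤ m → (1:ℂ) - w^m ≠ 0) {a : ℕ} (ha : 1 ≤ a) (b : ℕ) :
    QT w a b ≠ 0 := by
  rw [QT, Finset.prod_ne_zero_iff]
  intro i _
  exact hne (2*(a+i)) (by omega)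

lemma Podd_ne (w : ℂ) (hne : ∀ m : ℕ, 1 ≤ m → (1:ℂ) - w^m ≠ 0) (n : ℕ) : Podd w n ≠ 0 := by
  rw [Podd, Finset.prod_ne_zero_iff]
  intro i _
  exact hne (4*i+2) (by omega)

lemma pk4_ne (w : ℂ) (hne : ∀ m : ℕ, 1 ≤ m → (1:ℂ) - w^m ≠ 0) (n : ℕ) : pk4 w n ≠ 0 := by
  rw [pk4, Finset.prod_ne_zero_iff]
  intro i _
  exact hne (4*i+4) (by omega)

lemma qPoch_pk (w : ℂ) (n : ℕ) : qPoch (w^2) (w^2) n = QT w 1 n := by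
  apply Finset.prod_congr rfl
  intro i _
  rw [← pow_mul, ← pow_add]
  congr 2
  omega

lemma qPoch_pk2 (w : ℂ) (n : ℕ) : qPoch ((w^2)^2) (w^2) n = QT w 2 n := by
  apply Finset.prod_congr rfl
  intro i _
  rw [← pow_mul, ← pow_mul, ← pow_add]
  congr 2
  omega

lemma qPoch_pk4 (w : ℂ) (n : ℕ) : qPoch (w^4) (w^4) n = pk4 w n := by
  apply Finset.prod_congr rfl
  intro i _
  rw [← pow_mul, ← pow_add]
  congr 2
  omega

lemma QT1_even (w : ℂ) : ∀ n : ℕ, QT w 1 (2*n) = Podd w n * pk4 w n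
  | 0 => by simp [QT, Podd, pk4]
  | n+1 => by
    have ih := QT1_even w n
    have h1 : 2*(n+1) = (2*n+1)+1 := by omega
    have h2 : Podd w (n+1) = Podd w n * (1 - w^(4*n+2)) := Finset.prod_range_succ _ n
    have h3 : pk4 w (n+1) = pk4 w n * (1 - w^(4*n+4)) := Finset.prod_range_succ _ n
    rw [h1, QT_succ_top, QT_succ_top, ih, h2, h3]
    have e1 : 2*(1+2*n) = 4*n+2 := by omega
    have e2 : 2*(1+(2*n+1)) = 4*n+4 := by omega
    rw [e1, e2]
    ring

lemma QT1_odd (w : ℂ) (n : ℕ) : QT w 1 (n+1) = (1 - w^2) * QT w 2 n := by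
  rw [QT_succ_bot]

lemma QT_swap (w : ℂ) (a : ℕ) : ∀ b : ℕ,
    (1 - w^(2*(a+b))) * QT w a b = (1 - w^(2*a)) * QT w (a+1) b
  | 0 => by simp [QT_zero]
  | b+1 => by
    have ih := QT_swap w a b
    rw [QT_succ_top, QT_succ_top]
    have e1 : a+1+b = a+(b+1) := by omega
    rw [e1]
    calc (1 - w^(2*(a+(b+1)))) * (QT w a b * (1 - w^(2*(a+b))))
        = (1 - w^(2*(a+(b+1)))) * ((1 - w^(2*(a+b))) * QT w a b) := by ring
      _ = (1 - w^(2*(a+(b+1)))) * ((1 - w^(2*a)) * QT w (a+1) b) := by rw [ih]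
      _ = (1 - w^(2*a)) * (QT w (a+1) b * (1 - w^(2*(a+(b+1))))) := by ring

/-! ### epsilon weight and small helpers -/

noncomputable def eps (k : ℕ) : ℂ := if k = 0 then 1 else 2

lemma neg_one_pow_congr_mod2 {a b : ℕ} (h : a % 2 = b % 2) : (-1:ℂ)^a = (-1)^b := by
  conv_lhs => rw [← Nat.div_add_mod a 2]
  conv_rhs => rw [← Nat.div_add_mod b 2]
  rw [pow_add, pow_add, pow_mul, pow_mul, h]
  norm_num

lemma neg_one_zpow_neg (k : ℤ) : (-1:ℂ)^(-k) = (-1)^k := by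
  rw [zpow_neg]
  have h1 : ((-1:ℂ)^k) * ((-1:ℂ)^k) = 1 := by
    rw [← zpow_add₀ (by norm_num : (-1:ℂ) ≠ 0)]
    exact Even.neg_one_zpow ⟨k, rfl⟩
  exact inv_eq_of_mul_eq_one_left h1

lemma key1 (w : ℂ) (k : ℤ) : (-1:ℂ)^k * (-w)^(-(k^2)) = w^(-(k^2)) := by
  rw [show -w = (-1:ℂ) * w from by ring, mul_zpow, ← mul_assoc,
    ← zpow_add₀ (by norm_num : (-1:ℂ) ≠ 0)]
  have he : Even (k + -(k^2)) := by
    have h1 : k + -(k^2) = -((k-1)*((k-1)+1)) := by ring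
    rw [h1]
    exact (Int.even_mul_succ_self (k-1)).neg
  rw [he.neg_one_zpow, one_mul]

lemma sym_sum (f : ℤ → ℂ) (hs : ∀ k : ℤ, f (-k) = f k) : ∀ j : ℕ,
    ∑ k ∈ Finset.Icc (-(j:ℤ)) (j:ℤ), f k = ∑ k ∈ Finset.range (j+1), eps k * f (k:ℤ)
  | 0 => by simp [eps]
  | j+1 => by
    have ih := sym_sum f hs j
    have hins : Finset.Icc (-((j+1:ℕ):ℤ)) ((j+1:ℕ):ℤ)
        = insert (-((j+1:ℕ):ℤ)) (insert ((j+1:ℕ):ℤ) (Finset.Icc (-(j:ℤ)) (j:ℤ))) := by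
      ext x
      simp only [Finset.mem_Icc, Finset.mem_insert]
      push_cast
      omega
    rw [hins, Finset.sum_insert (by
        simp only [Finset.mem_insert, Finset.mem_Icc]
        push_cast
        omega),
      Finset.sum_insert (by
        simp only [Finset.mem_Icc]
        push_cast
        omega)]
    rw [Finset.sum_range_succ, ih, hs ((j+1:ℕ):ℤ)]
    have he : eps (j+1) = 2 := by simp [eps]
    rw [he]
    ring

lemma parity_3sq (j : ℕ) : (3*j^2+2*j) % 2 = j % 2 := by
  rcases Nat.even_or_odd j with ⟨a, rfl⟩ | ⟨a, rfl⟩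
  · have h : 3*(a+a)^2+2*(a+a) = 2*(6*a^2+2*a) := by ring
    omega
  · have h : 3*(2*a+1)^2+2*(2*a+1) = 2*(6*a^2+8*a+2)+1 := by ring
    omega

lemma sum_tri (f : ℕ → ℕ → ℂ) : ∀ n : ℕ,
    ∑ j ∈ Finset.range (n+1), ∑ k ∈ Finset.range (j+1), f j k
      = ∑ k ∈ Finset.range (n+1), ∑ j ∈ Finset.Icc k n, f j k
  | 0 => by simp
  | n+1 => by
    have ih := sum_tri f n
    rw [Finset.sum_range_succ, ih, Finset.sum_range_succ (fun k =>
      ∑ j ∈ Finset.Icc k (n+1), f j k), Finset.Icc_self, Finset.sum_singleton]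
    have h1 : ∀ k ∈ Finset.range (n+1), (∑ j ∈ Finset.Icc k (n+1), f j k)
        = (∑ j ∈ Finset.Icc k n, f j k) + f (n+1) k := by
      intro k hk
      exact Finset.sum_Icc_succ_top (by simp at hk; omega) _
    rw [Finset.sum_congr rfl h1, Finset.sum_add_distrib, Finset.sum_range_succ (f (n+1))]
    ring

/-! ### alpha simplification -/

section main
variable (w : ℂ)

lemma aFun_neg (j : ℕ) :
    aFun (-w) j = (-1:ℂ)^j * (w ^ (3*j^2+2*j) * (1 + w^(2*j+1)) / (1 - w^2)) *
      ∑ k ∈ Finset.Icc (-(j:ℤ)) (j:ℤ), w^(-(k^2)) := by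
  rw [aFun, neg_sq, show ((-w)^(2*j+1) : ℂ) = -(w^(2*j+1)) from Odd.neg_pow ⟨j, by ring⟩ w,
    neg_pow w (3*j^2+2*j), neg_one_pow_congr_mod2 (parity_3sq j)]
  rw [Finset.sum_congr rfl (fun k _ => key1 w k)]
  ring

lemma alpha_term (hw0 : w ≠ 0) (j k : ℕ) (hk : k ≤ j) :
    w ^ (-(2 * (j:ℤ)^2 + 2*(j:ℤ))) * (w ^ (3*j^2+2*j) *
        (((-1:ℂ)^((k:ℕ):ℤ) * (1 - w^(2*j+1)) + (-1:ℂ)^j * (1 + w^(2*j+1)))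
          * w^(-(((k:ℕ):ℤ)^2))))
      = 2 * (-1:ℂ)^j * w^(2 * ee k (j-k)) := by
  obtain ⟨d, rfl⟩ : ∃ d, j = k + d := ⟨j - k, by omega⟩
  rw [show k + d - k = d from by omega]
  rw [zpow_natCast ((-1:ℂ)) k]
  have hE := ee_spec k d
  rcases Nat.even_or_odd d with h | h
  · have hd : d % 2 = 0 := Nat.even_iff.mp h
    rw [if_pos hd] at hE
    have hsgn : (-1:ℂ)^k = (-1:ℂ)^(k+d) := neg_one_pow_congr_mod2 (by omega)
    rw [hsgn]
    have hN : ((2 * ee k d : ℕ) : ℤ)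
        = (-(2 * ((k:ℤ)+d)^2 + 2*((k:ℤ)+d))) + ((3*(k+d)^2+2*(k+d) : ℕ) : ℤ)
          + (-(((k:ℕ):ℤ)^2)) := by
      have hE' : ((2 * ee k d : ℕ) : ℤ) = (d:ℤ)*(2*k+d) := by exact_mod_cast hE
      push_cast at hE' ⊢
      linear_combination hE'
    have hsplit : w ^ (-(2 * ((k:ℤ)+d)^2 + 2*((k:ℤ)+d))) * (w ^ ((3*(k+d)^2+2*(k+d) : ℕ)))
        * w^(-(((k:ℕ):ℤ)^2)) = w ^ (2 * ee k d) := by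
      rw [← zpow_natCast w (3*(k+d)^2+2*(k+d)), ← zpow_add₀ hw0, ← zpow_add₀ hw0, ← hN,
        zpow_natCast]
    calc w ^ (-(2 * ((k+d:ℕ):ℤ)^2 + 2*((k+d:ℕ):ℤ))) * (w ^ (3*(k+d)^2+2*(k+d)) *
          (((-1:ℂ)^(k+d) * (1 - w^(2*(k+d)+1)) + (-1:ℂ)^(k+d) * (1 + w^(2*(k+d)+1)))
            * w^(-(((k:ℕ):ℤ)^2))))
        = 2 * (-1:ℂ)^(k+d) * (w ^ (-(2 * ((k:ℤ)+d)^2 + 2*((k:ℤ)+d)))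
            * (w ^ ((3*(k+d)^2+2*(k+d) : ℕ))) * w^(-(((k:ℕ):ℤ)^2))) := by
          push_cast
          ring
      _ = 2 * (-1:ℂ)^(k+d) * w ^ (2 * ee k d) := by rw [hsplit]
  · have hd : d % 2 = 1 := Nat.odd_iff.mp h
    rw [if_neg (by omega)] at hE
    have hsgn : (-1:ℂ)^k = -(-1:ℂ)^(k+d) := by
      have h2 : (-1:ℂ)^(k+1) = (-1:ℂ)^(k+d) := neg_one_pow_congr_mod2 (by omega)
      rw [← h2, pow_succ]
      ring
    rw [hsgn]
    have hN : ((2 * ee k d : ℕ) : ℤ)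
        = (-(2 * ((k:ℤ)+d)^2 + 2*((k:ℤ)+d))) + ((3*(k+d)^2+2*(k+d) : ℕ) : ℤ)
          + (-(((k:ℕ):ℤ)^2)) + ((2*(k+d)+1 : ℕ) : ℤ) := by
      have hE' : ((2 * ee k d : ℕ) : ℤ) = (d:ℤ)*(2*k+d) + (2*(k+d)+1) := by exact_mod_cast hE
      push_cast at hE' ⊢
      linear_combination hE'
    have hsplit : w ^ (-(2 * ((k:ℤ)+d)^2 + 2*((k:ℤ)+d))) * (w ^ ((3*(k+d)^2+2*(k+d) : ℕ)))
        * w^(-(((k:ℕ):ℤ)^2)) * w ^ ((2*(k+d)+1 : ℕ)) = w ^ (2 * ee k d) := by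
      rw [← zpow_natCast w (3*(k+d)^2+2*(k+d)), ← zpow_natCast w (2*(k+d)+1),
        ← zpow_add₀ hw0, ← zpow_add₀ hw0, ← zpow_add₀ hw0, ← hN, zpow_natCast]
    calc w ^ (-(2 * ((k+d:ℕ):ℤ)^2 + 2*((k+d:ℕ):ℤ))) * (w ^ (3*(k+d)^2+2*(k+d)) *
          ((-(-1:ℂ)^(k+d) * (1 - w^(2*(k+d)+1)) + (-1:ℂ)^(k+d) * (1 + w^(2*(k+d)+1)))
            * w^(-(((k:ℕ):ℤ)^2))))
        = 2 * (-1:ℂ)^(k+d) * (w ^ (-(2 * ((k:ℤ)+d)^2 + 2*((k:ℤ)+d)))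
            * (w ^ ((3*(k+d)^2+2*(k+d) : ℕ))) * w^(-(((k:ℕ):ℤ)^2)) * w ^ (2*(k+d)+1)) := by
          push_cast
          ring
      _ = 2 * (-1:ℂ)^(k+d) * w ^ (2 * ee k d) := by rw [hsplit]

lemma alpha_eq (hw0 : w ≠ 0) (j : ℕ) :
    w ^ (-(2 * (j:ℤ)^2 + 2*(j:ℤ))) * (aFun w j + aFun (-w) j)
      = 2 * (-1:ℂ)^j / (1 - w^2) * ∑ k ∈ Finset.range (j+1), eps k * w^(2 * ee k (j-k)) := by
  set F : ℤ → ℂ := fun k =>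
    w ^ (-(2 * (j:ℤ)^2 + 2*(j:ℤ))) * (w ^ (3*j^2+2*j) *
        (((-1:ℂ)^k * (1 - w^(2*j+1)) + (-1:ℂ)^j * (1 + w^(2*j+1))) * w^(-(k^2)))) / (1 - w^2)
    with hF
  have hLHS : w ^ (-(2 * (j:ℤ)^2 + 2*(j:ℤ))) * (aFun w j + aFun (-w) j)
      = ∑ k ∈ Finset.Icc (-(j:ℤ)) (j:ℤ), F k := by
    rw [aFun, aFun_neg, Finset.mul_sum, Finset.mul_sum, ← Finset.sum_add_distrib,
      Finset.mul_sum]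
    apply Finset.sum_congr rfl
    intro k _
    rw [hF]
    ring
  rw [hLHS]
  have hsym : ∀ k : ℤ, F (-k) = F k := by
    intro k
    rw [hF]
    simp only [neg_one_zpow_neg, show ∀ k : ℤ, (-k)^2 = k^2 from fun k => by ring]
  rw [sym_sum F hsym j]
  rw [Finset.mul_sum]
  apply Finset.sum_congr rfl
  intro k hk
  have hkj : k ≤ j := by simp only [Finset.mem_range] at hk; omega
  have ht := alpha_term w hw0 j k hkj
  rw [hF]
  beta_reduce
  rw [ht]
  ring

/-! ### the inner sum and its closed form -/

variable (hne : ∀ m : ℕ, 1 ≤ m → (1:ℂ) - w^m ≠ 0)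
include hne

/-- the inner sum `U(k,n)` -/
noncomputable def Usum (w : ℂ) (k n : ℕ) : ℂ :=
  ∑ j ∈ Finset.Icc k n, (-1:ℂ)^j * w^(2 * ee k (j-k)) / (QT w 1 (n-j) * QT w 2 (n+j))

lemma TS_step (k d s : ℕ) :
    (-1:ℂ)^(k+d+1) * w^(2*gg k (d+1)) * (1-w^(2*s)) / (QT w 1 s * QT w 2 (2*k+2*d+s+2))
      = (-1:ℂ)^(k+d) * w^(2*gg k d) * (1-w^(2*(s+1))) / (QT w 1 (s+1) * QT w 2 (2*k+2*d+s+1))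
        + (-1:ℂ)^(k+d+1) *
            ((1-w^(2*(d+s+1)))*w^(2*ee k (d+1)) + (1-w^(2*(2*k+d+s+2)))*w^(2*ee (k+1) d))
            / (QT w 1 s * QT w 2 (2*k+2*d+s+2)) := by
  have hq1 : QT w 1 (s+1) = QT w 1 s * (1 - w^(2*(1+s))) := QT_succ_top w 1 s
  have hq2 : QT w 2 (2*k+2*d+s+2) = QT w 2 (2*k+2*d+s+1) * (1 - w^(2*(2+(2*k+2*d+s+1)))) :=
    QT_succ_top w 2 (2*k+2*d+s+1)
  have n1 : QT w 1 s ≠ 0 := QT_ne w hne le_rfl s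
  have n2 : QT w 2 (2*k+2*d+s+1) ≠ 0 := QT_ne w hne (by omega) _
  have n3 : (1:ℂ) - w^(2*(1+s)) ≠ 0 := hne _ (by omega)
  have n4 : (1:ℂ) - w^(2*(2+(2*k+2*d+s+1))) ≠ 0 := hne _ (by omega)
  rcases Nat.even_or_odd d with h | h
  · have hd : d % 2 = 0 := Nat.even_iff.mp h
    rw [R3 k hd, R1 k hd, ← gg_even k hd, hq1, hq2]
    field_simp
    ring
  · have hd : d % 2 = 1 := Nat.odd_iff.mp h
    rw [R6 k hd, R4 k hd, R5 k hd, hq1, hq2]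
    field_simp
    ring

lemma TS (k n : ℕ) :
    ∀ m, k ≤ m → m ≤ n →
      (∑ j ∈ Finset.Icc k m, (-1:ℂ)^j *
          ((1 - w^(2*(n-k))) * w^(2 * ee k (j-k))
            + (1 - w^(2*(n+k+1))) * (if k+1 ≤ j then w^(2 * ee (k+1) (j-(k+1))) else 0))
          / (QT w 1 (n-j) * QT w 2 (n+j)))
        = (-1:ℂ)^m * w^(2 * gg k (m-k)) * (1 - w^(2*(n-m))) / (QT w 1 (n-m) * QT w 2 (n+m)) := by
  intro m hkm hmn
  induction m, hkm using Nat.le_induction with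
  | base =>
    rw [Finset.Icc_self, Finset.sum_singleton]
    rw [if_neg (by omega), Nat.sub_self, ee_zero, gg_zero]
    ring
  | succ m hkm ih =>
    rw [Finset.sum_Icc_succ_top (by omega : k ≤ m + 1), ih (by omega)]
    rw [if_pos (by omega : k+1 ≤ m+1)]
    obtain ⟨d, rfl⟩ : ∃ d, m = k + d := ⟨m - k, by omega⟩
    obtain ⟨s, rfl⟩ : ∃ s, n = k + d + 1 + s := ⟨n - (k+d+1), by omega⟩
    have e1 : k + d + 1 + s - (k + d + 1) = s := by omega
    have e2 : k + d + 1 + s - (k + d) = s + 1 := by omega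
    have e3 : k + d + 1 + s + (k + d + 1) = 2*k+2*d+s+2 := by omega
    have e4 : k + d + 1 + s + (k + d) = 2*k+2*d+s+1 := by omega
    have e5 : k + d + 1 - k = d + 1 := by omega
    have e6 : k + d - k = d := by omega
    have e7 : k + d + 1 - (k + 1) = d := by omega
    have e8 : k + d + 1 + s - k = d + s + 1 := by omega
    have e9 : k + d + 1 + s + k + 1 = 2*k+d+s+2 := by omega
    rw [e1, e2, e3, e4, e5, e6, e7, e8, e9]
    exact (TS_step w hne k d s).symm

omit hne in
lemma Icc_bot_insert (k n : ℕ) (h : k ≤ n) :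
    Finset.Icc k n = insert k (Finset.Icc (k+1) n) := by
  ext x; simp [Finset.mem_Icc]; omega

lemma U_rec (k n : ℕ) (h : k < n) :
    (1 - w^(2*(n-k))) * Usum w k n = -((1 - w^(2*(n+k+1))) * Usum w (k+1) n) := by
  have hts := TS w hne k n n (by omega) le_rfl
  rw [Nat.sub_self] at hts
  have h0 : (1:ℂ) - w^(2*(0:ℕ)) = 0 := by norm_num
  rw [h0, mul_zero, zero_div] at hts
  have hsplit : (∑ j ∈ Finset.Icc k n, (-1:ℂ)^j *
          ((1 - w^(2*(n-k))) * w^(2 * ee k (j-k))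
            + (1 - w^(2*(n+k+1))) * (if k+1 ≤ j then w^(2 * ee (k+1) (j-(k+1))) else 0))
          / (QT w 1 (n-j) * QT w 2 (n+j)))
      = (1 - w^(2*(n-k))) * Usum w k n + (1 - w^(2*(n+k+1))) * Usum w (k+1) n := by
    have step1 : ∀ j ∈ Finset.Icc k n, (-1:ℂ)^j *
          ((1 - w^(2*(n-k))) * w^(2 * ee k (j-k))
            + (1 - w^(2*(n+k+1))) * (if k+1 ≤ j then w^(2 * ee (k+1) (j-(k+1))) else 0))
          / (QT w 1 (n-j) * QT w 2 (n+j))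
        = (1 - w^(2*(n-k))) * ((-1:ℂ)^j * w^(2 * ee k (j-k)) / (QT w 1 (n-j) * QT w 2 (n+j)))
          + (1 - w^(2*(n+k+1))) * ((-1:ℂ)^j *
              (if k+1 ≤ j then w^(2 * ee (k+1) (j-(k+1))) else 0)
              / (QT w 1 (n-j) * QT w 2 (n+j))) := by
      intro j _
      ring
    rw [Finset.sum_congr rfl step1, Finset.sum_add_distrib, ← Finset.mul_sum, ← Finset.mul_sum]
    unfold Usum
    congr 1
    congr 1
    rw [Icc_bot_insert k n (by omega), Finset.sum_insert (by simp)]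
    rw [if_neg (by omega), mul_zero, zero_div, zero_add]
    apply Finset.sum_congr rfl
    intro j hj
    rw [if_pos (by simp only [Finset.mem_Icc] at hj; omega)]
  rw [hsplit] at hts
  linear_combination hts

lemma U_closed : ∀ t k n, n = k + t →
    Usum w k n = (-1:ℂ)^k * QT w (n+k+1) (n-k) / (QT w 1 (n-k) * QT w 2 (n+n))
  | 0 => by
    intro k n hn
    subst hn
    rw [Usum, Nat.add_zero, Finset.Icc_self, Finset.sum_singleton]
    rw [Nat.sub_self, ee_zero, QT_zero, Nat.mul_zero, pow_zero, QT_zero]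
  | t+1 => by
    intro k n hn
    have ih := U_closed t (k+1) n (by omega)
    have hrec := U_rec w hne k n (by omega)
    rw [ih] at hrec
    apply mul_left_cancel₀ (hne (2*(n-k)) (by omega))
    rw [hrec]
    obtain rfl : n = k + t + 1 := by omega
    have e1 : k+t+1-k = t+1 := by omega
    have e2 : k+t+1-(k+1) = t := by omega
    have e3 : k+t+1+k+1 = 2*k+t+2 := by omega
    have e4 : k+t+1+(k+1)+1 = 2*k+t+3 := by omega
    rw [e1, e2, e3, e4]
    have h5 : QT w (2*k+t+2) (t+1) = (1 - w^(2*(2*k+t+2))) * QT w (2*k+t+3) t :=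
      QT_succ_bot w _ t
    have h6 : QT w 1 (t+1) = QT w 1 t * (1 - w^(2*(1+t))) := QT_succ_top w 1 t
    rw [h5, h6]
    have n1 : QT w 1 t ≠ 0 := QT_ne w hne le_rfl t
    have n2 : QT w 2 (k+t+1+(k+t+1)) ≠ 0 := QT_ne w hne (by omega) _
    have n3 : (1:ℂ) - w^(2*(1+t)) ≠ 0 := hne _ (by omega)
    field_simp
    ring

/-! ### the outer sum identity -/

lemma Zpart (n : ℕ) : ∀ m, m ≤ n →
    (∑ k ∈ Finset.range (m+1), eps k * (-1:ℂ)^k *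
        (QT w (n+k+2) (n+1-k) / QT w 1 (n+1-k)
          + (1 - w^(4*n+2)) * QT w (n+k+1) (n-k) / QT w 1 (n-k)))
      = 2 * (-1:ℂ)^m * (1 - w^(2*(n+1-m))) * QT w (n+m+2) (n-m) / QT w 1 (n+1-m) := by
  intro m
  induction m with
  | zero =>
    intro _
    rw [Finset.range_one, Finset.sum_singleton]
    simp only [eps, if_pos rfl, if_true, pow_zero, one_mul, Nat.add_zero, Nat.sub_zero, mul_one,
      Nat.mul_one]
    have h1 : QT w (n+2) (n+1) = QT w (n+2) n * (1 - w^(2*(2*n+2))) := by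
      have h := QT_succ_top w (n+2) n
      rw [show n+2+n = 2*n+2 from by omega] at h
      exact h
    have h2 : (1 - w^(2*(2*n+1))) * QT w (n+1) n = (1 - w^(2*(n+1))) * QT w (n+2) n := by
      have h := QT_swap w (n+1) n
      rw [show n+1+n = 2*n+1 from by omega] at h
      exact h
    have h3 : QT w 1 (n+1) = QT w 1 n * (1 - w^(2*(1+n))) := QT_succ_top w 1 n
    have n1 : QT w 1 n ≠ 0 := QT_ne w hne le_rfl n
    have n3 : (1:ℂ) - w^(2*(1+n)) ≠ 0 := hne _ (by omega)
    have n4 : (1:ℂ) - w^(2*(2*n+1)) ≠ 0 := hne _ (by omega)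
    have h2' : QT w (n+1) n = (1 - w^(2*(n+1))) * QT w (n+2) n / (1 - w^(2*(2*n+1))) := by
      rw [eq_div_iff n4]; linear_combination h2
    rw [h1, h2', h3]
    rw [show 4*n+2 = 2*(2*n+1) from by omega]
    field_simp
    ring
  | succ m ihm =>
    intro hm1
    have ih := ihm (by omega)
    rw [Finset.sum_range_succ, ih]
    have heps : eps (m+1) = 2 := by simp [eps]
    rw [heps]
    obtain ⟨s, rfl⟩ : ∃ s, n = m + s + 1 := ⟨n - m - 1, by omega⟩
    have e1 : m+s+1-m = s+1 := by omega
    have e2 : m+s+1+1-m = s+2 := by omega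
    have e3 : m+s+1-(m+1) = s := by omega
    have e4 : m+s+1+1-(m+1) = s+1 := by omega
    have e5 : m+s+1+(m+1)+2 = 2*m+s+4 := by omega
    have e6 : m+s+1+(m+1)+1 = 2*m+s+3 := by omega
    have e7 : m+s+1+m+2 = 2*m+s+3 := by omega
    rw [e1, e2, e3, e4, e5, e6, e7]
    have h1 : QT w (2*m+s+3) (s+1) = (1 - w^(2*(2*m+s+3))) * QT w (2*m+s+4) s :=
      QT_succ_bot w _ s
    have h2 : QT w (2*m+s+4) (s+1) = QT w (2*m+s+4) s * (1 - w^(2*(2*m+2*s+4))) := by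
      have h := QT_succ_top w (2*m+s+4) s
      rw [show 2*m+s+4+s = 2*m+2*s+4 from by omega] at h
      exact h
    have h3 : (1 - w^(2*(2*m+2*s+3))) * QT w (2*m+s+3) s
        = (1 - w^(2*(2*m+s+3))) * QT w (2*m+s+4) s := by
      have h := QT_swap w (2*m+s+3) s
      rw [show 2*m+s+3+s = 2*m+2*s+3 from by omega] at h
      exact h
    have n4 : (1:ℂ) - w^(2*(2*m+2*s+3)) ≠ 0 := hne _ (by omega)
    have h3' : QT w (2*m+s+3) s
        = (1 - w^(2*(2*m+s+3))) * QT w (2*m+s+4) s / (1 - w^(2*(2*m+2*s+3))) := by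
      rw [eq_div_iff n4]; linear_combination h3
    have h4 : QT w 1 (s+1) = QT w 1 s * (1 - w^(2*(1+s))) := QT_succ_top w 1 s
    have h5 : QT w 1 (s+2) = QT w 1 (s+1) * (1 - w^(2*(1+(s+1)))) := QT_succ_top w 1 (s+1)
    rw [h1, h2, h3', h4, h5, h4]
    have n1 : QT w 1 s ≠ 0 := QT_ne w hne le_rfl s
    have n2 : (1:ℂ) - w^(2*(1+s)) ≠ 0 := hne _ (by omega)
    have n3 : (1:ℂ) - w^(2*(1+(s+1))) ≠ 0 := hne _ (by omega)
    rw [show (4*(m+s+1)+2) = 2*(2*m+2*s+3) from by omega]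
    field_simp
    ring

lemma L4 : ∀ n : ℕ,
    (∑ k ∈ Finset.range (n+1), eps k * (-1:ℂ)^k * (QT w (n+k+1) (n-k) / QT w 1 (n-k)))
      = (-1:ℂ)^n * Podd w n
  | 0 => by
    rw [Finset.range_one, Finset.sum_singleton]
    simp [eps, QT_zero, Podd]
  | n+1 => by
    have ih := L4 n
    have hz := Zpart w hne n n le_rfl
    rw [Nat.sub_self, QT_zero, show n+1-n = 1 from by omega] at hz
    have hq11 : QT w 1 1 = 1 - w^2 := by
      have h := QT_succ_top w 1 0
      rw [QT_zero, one_mul] at h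
      rw [h]
    rw [hq11, mul_one] at hz
    have hw2 : (1:ℂ) - w^2 ≠ 0 := hne 2 (by omega)
    rw [show (2*1 : ℕ) = 2 from by omega, mul_div_assoc, div_self hw2, mul_one] at hz
    have hsplit : (∑ k ∈ Finset.range (n+1), eps k * (-1:ℂ)^k *
        (QT w (n+k+2) (n+1-k) / QT w 1 (n+1-k)
          + (1 - w^(4*n+2)) * QT w (n+k+1) (n-k) / QT w 1 (n-k)))
        = (∑ k ∈ Finset.range (n+1), eps k * (-1:ℂ)^k *
            (QT w (n+k+2) (n+1-k) / QT w 1 (n+1-k)))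
          + (1 - w^(4*n+2)) * (∑ k ∈ Finset.range (n+1), eps k * (-1:ℂ)^k *
              (QT w (n+k+1) (n-k) / QT w 1 (n-k))) := by
      rw [Finset.mul_sum, ← Finset.sum_add_distrib]
      apply Finset.sum_congr rfl
      intro k _
      ring
    rw [hsplit, ih] at hz
    rw [Finset.sum_range_succ]
    have e0 : n+1-(n+1) = 0 := by omega
    rw [e0, QT_zero, QT_zero]
    have heps : eps (n+1) = 2 := by simp [eps]
    rw [heps]
    have hmain : (∑ k ∈ Finset.range (n+1), eps k * (-1:ℂ)^k *
        (QT w (n+1+k+1) (n+1-k) / QT w 1 (n+1-k)))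
        = (∑ k ∈ Finset.range (n+1), eps k * (-1:ℂ)^k *
            (QT w (n+k+2) (n+1-k) / QT w 1 (n+1-k))) := by
      apply Finset.sum_congr rfl
      intro k _
      rw [show n+1+k+1 = n+k+2 from by omega]
    rw [hmain]
    have hS1 : (∑ k ∈ Finset.range (n+1), eps k * (-1:ℂ)^k *
        (QT w (n+k+2) (n+1-k) / QT w 1 (n+1-k)))
        = 2*(-1:ℂ)^n - (1 - w^(4*n+2)) * ((-1:ℂ)^n * Podd w n) := by
      linear_combination hz
    rw [hS1]
    have hPodd : Podd w (n+1) = Podd w n * (1 - w^(4*n+2)) := Finset.prod_range_succ _ n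
    rw [hPodd]
    ring

end main

/-! ### Main theorem -/

/-- Theorem 2.1: `(α_n, β_n)` with `α_n = w^{-2n²-2n}(a_n(w)+a_n(-w))` and
`β_n = 2(-1)^n/((w⁴;w⁴)_n (1-w^{4n+2}))` form a Bailey pair relative to `a = q`
in base `q`, where `q = w²`. -/
theorem mock_bailey_pair (w : ℂ) (h0 : 0 < ‖w‖) (h1 : ‖w‖ < 1) :
    ∀ n : ℕ,
      2 * (-1 : ℂ) ^ n / (qPoch (w ^ 4) (w ^ 4) n * (1 - w ^ (4 * n + 2))) =
        ∑ j ∈ Finset.range (n + 1),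
          (w ^ (-(2 * (j : ℤ) ^ 2 + 2 * (j : ℤ))) * (aFun w j + aFun (-w) j)) /
            (qPoch (w ^ 2) (w ^ 2) (n - j) * qPoch ((w ^ 2) ^ 2) (w ^ 2) (n + j)) := by
  have hw0 : w ≠ 0 := by
    intro h
    rw [h] at h0
    simp at h0
  have hne : ∀ m : ℕ, 1 ≤ m → (1:ℂ) - w^m ≠ 0 := by
    intro m hm hc
    have hwm : w^m = 1 := by linear_combination -hc
    have habs : ‖w‖ ^ m = 1 := by
      rw [← norm_pow, hwm, norm_one]
    have hlt : ‖w‖ ^ m < 1 := pow_lt_one₀ (norm_nonneg w) h1 (by omega)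
    rw [habs] at hlt
    exact lt_irrefl 1 hlt
  intro n
  -- rewrite the RHS
  have hterm : ∀ j ∈ Finset.range (n+1),
      (w ^ (-(2 * (j : ℤ) ^ 2 + 2 * (j : ℤ))) * (aFun w j + aFun (-w) j)) /
          (qPoch (w ^ 2) (w ^ 2) (n - j) * qPoch ((w ^ 2) ^ 2) (w ^ 2) (n + j))
        = ∑ k ∈ Finset.range (j+1),
            (2/(1-w^2)) * (eps k * ((-1:ℂ)^j * w^(2 * ee k (j-k))
              / (QT w 1 (n-j) * QT w 2 (n+j)))) := by
    intro j _
    rw [qPoch_pk, qPoch_pk2, alpha_eq w hw0 j, Finset.mul_sum, Finset.sum_div]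
    apply Finset.sum_congr rfl
    intro k _
    ring
  rw [Finset.sum_congr rfl hterm, sum_tri]
  have hinner : ∀ k ∈ Finset.range (n+1),
      (∑ j ∈ Finset.Icc k n, (2/(1-w^2)) * (eps k * ((-1:ℂ)^j * w^(2 * ee k (j-k))
          / (QT w 1 (n-j) * QT w 2 (n+j)))))
        = (2/((1-w^2) * QT w 2 (n+n))) * (eps k * ((-1:ℂ)^k
            * (QT w (n+k+1) (n-k) / QT w 1 (n-k)))) := by
    intro k hk
    have hkn : k ≤ n := by simp only [Finset.mem_range] at hk; omega
    rw [← Finset.mul_sum, ← Finset.mul_sum]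
    have hU : (∑ j ∈ Finset.Icc k n, (-1:ℂ)^j * w^(2 * ee k (j-k))
          / (QT w 1 (n-j) * QT w 2 (n+j))) = Usum w k n := rfl
    rw [hU, U_closed w hne (n-k) k n (by omega)]
    have nQ2 : QT w 2 (n+n) ≠ 0 := QT_ne w hne (by omega) _
    have nQ1 : QT w 1 (n-k) ≠ 0 := QT_ne w hne le_rfl _
    have hw2 : (1:ℂ) - w^2 ≠ 0 := hne 2 (by omega)
    rw [← div_div, ← div_div]
    ring
  rw [Finset.sum_congr rfl hinner]
  have hpull : (∑ k ∈ Finset.range (n+1), (2/((1-w^2) * QT w 2 (n+n))) * (eps k * ((-1:ℂ)^k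
          * (QT w (n+k+1) (n-k) / QT w 1 (n-k)))))
      = (2/((1-w^2) * QT w 2 (n+n))) * (∑ k ∈ Finset.range (n+1),
          eps k * (-1:ℂ)^k * (QT w (n+k+1) (n-k) / QT w 1 (n-k))) := by
    rw [Finset.mul_sum]
    apply Finset.sum_congr rfl
    intro k _
    ring
  rw [hpull, L4 w hne n, qPoch_pk4]
  -- final scalar identity
  have hkey : (1-w^2) * QT w 2 (n+n) = Podd w n * pk4 w n * (1 - w^(4*n+2)) := by
    have i1 : QT w 1 (2*n+1) = (1 - w^2) * QT w 2 (2*n) := QT1_odd w (2*n)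
    have i2 : QT w 1 (2*n+1) = QT w 1 (2*n) * (1 - w^(2*(1+2*n))) := QT_succ_top w 1 (2*n)
    have i3 : QT w 1 (2*n) = Podd w n * pk4 w n := QT1_even w n
    rw [show n+n = 2*n from by omega, ← i1, i2, i3, show 2*(1+2*n) = 4*n+2 from by omega]
  have hP : Podd w n ≠ 0 := Podd_ne w hne n
  have hp4 : pk4 w n ≠ 0 := pk4_ne w hne n
  have h42 : (1:ℂ) - w^(4*n+2) ≠ 0 := hne _ (by omega)
  have hw2 : (1:ℂ) - w^2 ≠ 0 := hne 2 (by omega)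
  have nQ2 : QT w 2 (n+n) ≠ 0 := QT_ne w hne (by omega) _
  field_simp
  linear_combination hkey
end

section
/- Let q ∈ ℂ with 0 < |q| < 1. Then for every integer n ≥ 0, Σ_{j=0}^{n} q^{n-j} / ((q²;q²)_{n-j} · (q;q²)_{j+1}) = Σ_{j=0}^{n} (-1)^j q^{j(j+1)} / ((q;q)_{n-j} · (q²;q²)_j · (1 - q^{2j+1})). -/
namespace CoeffId

noncomputable def u (q : ℂ) (n : ℕ) : ℂ := (qPoch (q^2) (q^2) n)⁻¹
noncomputable def kk (q : ℂ) (i : ℕ) : ℂ :=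
  (-1)^i * q^(i*(i+1)) * (qPoch (q^2) (q^2) i * (1 - q^(2*i+1)))⁻¹
noncomputable def EE (q : ℂ) (n : ℕ) : ℂ :=
  ∑ i ∈ Finset.range (n+1), (-1)^i * q^(i*(i-1)) * u q i * u q (n-i)
noncomputable def SS (q : ℂ) (n : ℕ) : ℂ :=
  ∑ m ∈ Finset.range (n+1), q^m * u q m * u q (n-m)
noncomputable def WW (q : ℂ) (j : ℕ) : ℂ :=
  ∑ i ∈ Finset.range (j+1), kk q i * u q (j-i)

lemma qPoch_succ (x q : ℂ) (n : ℕ) : qPoch x q (n+1) = qPoch x q n * (1 - x * q^n) :=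
  Finset.prod_range_succ _ _

lemma one_sub_ne {q : ℂ} (h1 : ‖q‖ < 1) (m : ℕ) (hm : m ≠ 0) :
    (1 : ℂ) - q^m ≠ 0 := by
  intro h
  have hq1 : q^m = 1 := by linear_combination -h
  have h2 : ‖q^m‖ < 1 := by
    rw [norm_pow]; exact pow_lt_one₀ (norm_nonneg q) h1 hm
  rw [hq1] at h2; simp at h2

lemma qPoch_ne {q : ℂ} (h1 : ‖q‖ < 1) (a b : ℕ) (ha : a ≠ 0) (n : ℕ) :
    qPoch (q^a) (q^b) n ≠ 0 := by
  rw [qPoch]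
  apply Finset.prod_ne_zero_iff.mpr
  intro i _
  have h : (q^a) * (q^b)^i = q^(a + b*i) := by rw [← pow_mul, ← pow_add]
  rw [h]
  exact one_sub_ne h1 _ (by omega)

lemma u_ne {q : ℂ} (h1 : ‖q‖ < 1) (n : ℕ) : u q n ≠ 0 := by
  have := qPoch_ne h1 2 2 (by norm_num) n
  simp [u, this]

lemma u_rel {q : ℂ} (h1 : ‖q‖ < 1) (m : ℕ) :
    (1 - q^(2*m+2)) * u q (m+1) = u q m := by
  have hz : (1 : ℂ) - q^(2*m+2) ≠ 0 := one_sub_ne h1 _ (by omega)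
  have hp : qPoch (q^2) (q^2) m ≠ 0 := qPoch_ne h1 2 2 (by norm_num) m
  rw [u, u, qPoch_succ, show (q:ℂ)^2 * (q^2)^m = q^(2*m+2) from by ring, mul_inv]
  field_simp


lemma EA {q : ℂ} (h1 : ‖q‖ < 1) (t : ℕ) :
    ∑ i ∈ Finset.range (t+2),
      (-1)^i * q^(i*(i-1)) * ((1 - q^(2*(t+1-i))) * u q (t+1-i)) * u q i = EE q t := by
  rw [Finset.sum_range_succ]
  rw [show t+1-(t+1) = 0 from by omega]
  norm_num
  rw [EE]
  apply Finset.sum_congr rfl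
  intro i hi
  have hit : i ≤ t := by simpa [Nat.lt_succ_iff] using hi
  rw [show t+1-i = (t-i)+1 from by omega, show 2*((t-i)+1) = 2*(t-i)+2 from by ring,
    u_rel h1 (t-i)]
  ring

lemma EB {q : ℂ} (h1 : ‖q‖ < 1) (t : ℕ) :
    ∑ i ∈ Finset.range (t+1),
      (-1)^i * q^(i*(i-1)) * ((1 - q^(2*i+2)) * u q (i+1)) * u q (t-i) = EE q t := by
  rw [EE]
  apply Finset.sum_congr rfl
  intro i hi
  rw [u_rel h1 i]

lemma nat_exp (k : ℕ) : (k+1)*(k+1-1) = k*(k-1)+2*k := by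
  cases k <;> simp <;> ring

lemma E_rec {q : ℂ} (h1 : ‖q‖ < 1) (t : ℕ) :
    (1 - q^(2*t+2)) * EE q (t+1) = (1 - q^(2*t)) * EE q t := by
  have key : (1 - q^(2*t+2)) * EE q (t+1)
      = (∑ i ∈ Finset.range (t+2),
          (-1)^i * q^(i*(i-1)) * ((1 - q^(2*(t+1-i))) * u q (t+1-i)) * u q i)
        - q^(2*t) * ∑ i ∈ Finset.range (t+1),
          (-1)^i * q^(i*(i-1)) * ((1 - q^(2*i+2)) * u q (i+1)) * u q (t-i) := by
    rw [EE, Finset.mul_sum, Finset.mul_sum]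
    rw [Finset.sum_range_succ' (fun i => (1 - q^(2*t+2)) * ((-1)^i * q^(i*(i-1)) * u q i * u q (t+1-i))) (t+1)]
    rw [Finset.sum_range_succ' (fun i => (-1)^i * q^(i*(i-1)) * ((1 - q^(2*(t+1-i))) * u q (t+1-i)) * u q i) (t+1)]
    rw [add_sub_right_comm, ← Finset.sum_sub_distrib]
    congr 1
    · apply Finset.sum_congr rfl
      intro k hk
      have hkt : k ≤ t := by simpa [Nat.lt_succ_iff] using hk
      rw [show t+1-(k+1) = t-k from by omega, nat_exp k,
          show 2*t+2 = 2*(t-k)+(2*k+2) from by omega,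
          show 2*t = 2*(t-k)+2*k from by omega]
      ring
    · rw [show 2*(t+1-0) = 2*t+2 from by omega]
      ring
  rw [key, EA h1 t, EB h1 t]
  ring

lemma E_zero {q : ℂ} (h1 : ‖q‖ < 1) (j : ℕ) (hj : j ≠ 0) : EE q j = 0 := by
  induction j with
  | zero => omega
  | succ t ih =>
    rcases Nat.eq_zero_or_pos t with ht | ht
    · subst ht
      simp [EE, Finset.sum_range_succ, u]
      ring
    · have hz : (1 : ℂ) - q^(2*t+2) ≠ 0 := one_sub_ne h1 _ (by omega)
      have := E_rec h1 t
      rw [ih (by omega), mul_zero] at this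
      exact (mul_eq_zero.mp this).resolve_left hz


lemma S_rec {q : ℂ} (h1 : ‖q‖ < 1) (n : ℕ) :
    (1 - q^(n+1)) * SS q (n+1) = SS q n := by
  have hrefl : SS q (n+1) = ∑ m ∈ Finset.range (n+1+1), q^(n+1-m) * u q (n+1-m) * u q m := by
    rw [SS, ← Finset.sum_range_reflect]
    apply Finset.sum_congr rfl
    intro m hm
    have hm' : m ≤ n+1 := by have := Finset.mem_range.mp hm; omega
    rw [show n+1+1-1-m = n+1-m from by omega, show n+1-(n+1-m) = m from by omega]
  have key : (1 - q^(n+1)) * SS q (n+1)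
      = ∑ m ∈ Finset.range (n+1+1), q^m * ((1 - q^(2*(n+1-m))) * u q (n+1-m)) * u q m := by
    calc (1 - q^(n+1)) * SS q (n+1) = SS q (n+1) - q^(n+1) * SS q (n+1) := by ring
      _ = ∑ m ∈ Finset.range (n+1+1),
            (q^m * u q m * u q (n+1-m) - q^(n+1) * (q^(n+1-m) * u q (n+1-m) * u q m)) := by
          nth_rewrite 2 [hrefl]
          rw [SS, Finset.mul_sum, ← Finset.sum_sub_distrib]
      _ = _ := by
          apply Finset.sum_congr rfl
          intro m hm
          have hm' : m ≤ n+1 := by have := Finset.mem_range.mp hm; omega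
          set d := n+1-m with hdd
          rw [show n+1 = m+d from by omega]
          ring
  rw [key, Finset.sum_range_succ, show n+1-(n+1) = 0 from by omega]
  norm_num
  rw [SS]
  apply Finset.sum_congr rfl
  intro m hm
  have hm' : m ≤ n := by have := Finset.mem_range.mp hm; omega
  rw [show n+1-m = (n-m)+1 from by omega, show 2*((n-m)+1) = 2*(n-m)+2 from by ring,
    u_rel h1 (n-m)]
  ring

lemma S_eq {q : ℂ} (h1 : ‖q‖ < 1) (n : ℕ) : SS q n = (qPoch q q n)⁻¹ := by
  induction n with
  | zero => simp [SS, u, qPoch]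
  | succ n ih =>
    have hz : (1 : ℂ) - q^(n+1) ≠ 0 := one_sub_ne h1 _ (by omega)
    have hr := S_rec h1 n
    rw [ih] at hr
    rw [qPoch_succ, show q * q^n = q^(n+1) from by ring, mul_inv]
    rw [← hr]
    field_simp



lemma nat_exp2 (i : ℕ) : i*(i+1) = i*(i-1)+2*i := by
  cases i <;> simp <;> ring

lemma kk_rel {q : ℂ} (h1 : ‖q‖ < 1) (i : ℕ) :
    kk q i * (1 - q^(2*i+1)) = (-1)^i * (q^(i*(i-1)) * q^(2*i)) * u q i := by
  have hz : (1 : ℂ) - q^(2*i+1) ≠ 0 := one_sub_ne h1 _ (by omega)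
  have hp : qPoch (q^2) (q^2) i ≠ 0 := qPoch_ne h1 2 2 (by norm_num) i
  rw [kk, u, mul_inv, nat_exp2, pow_add]
  field_simp

lemma WA {q : ℂ} (h1 : ‖q‖ < 1) (t : ℕ) :
    ∑ i ∈ Finset.range (t+1+1), kk q i * ((1 - q^(2*(t+1-i))) * u q (t+1-i)) = WW q t := by
  rw [Finset.sum_range_succ, show t+1-(t+1) = 0 from by omega]
  norm_num
  rw [WW]
  apply Finset.sum_congr rfl
  intro i hi
  have hit : i ≤ t := by have := Finset.mem_range.mp hi; omega
  rw [show t+1-i = (t-i)+1 from by omega, show 2*((t-i)+1) = 2*(t-i)+2 from by ring,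
    u_rel h1 (t-i)]

lemma W_rec {q : ℂ} (h1 : ‖q‖ < 1) (t : ℕ) :
    (1 - q^(2*t+3)) * WW q (t+1) = WW q t := by
  have key : (1 - q^(2*t+3)) * WW q (t+1) - WW q t = q^(2*t+2) * EE q (t+1) := by
    rw [← WA h1 t, WW, EE, Finset.mul_sum, Finset.mul_sum, ← Finset.sum_sub_distrib]
    apply Finset.sum_congr rfl
    intro i hi
    have hit : i ≤ t+1 := by have := Finset.mem_range.mp hi; omega
    have hk := kk_rel h1 i
    set d := t+1-i with hdd
    rw [show 2*t+3 = 2*d+(2*i+1) from by omega, show 2*t+2 = 2*d+2*i from by omega]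
    rw [pow_add, pow_add]
    linear_combination (q^(2*d) * u q d) * hk
  have hE0 : EE q (t+1) = 0 := E_zero h1 (t+1) (by omega)
  linear_combination key + q^(2*t+2) * hE0

lemma W_eq {q : ℂ} (h1 : ‖q‖ < 1) (j : ℕ) : WW q j = (qPoch q (q^2) (j+1))⁻¹ := by
  induction j with
  | zero => simp [WW, kk, u, qPoch]
  | succ j ih =>
    have hz : (1 : ℂ) - q^(2*j+3) ≠ 0 := one_sub_ne h1 _ (by omega)
    have hp : qPoch q (q^2) (j+1) ≠ 0 := by
      have := qPoch_ne h1 1 2 (by norm_num) (j+1)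
      simpa using this
    have hr := W_rec h1 j
    rw [ih] at hr
    rw [qPoch_succ, show q * (q^2)^(j+1) = q^(2*j+3) from by ring, mul_inv]
    rw [← hr]
    field_simp


lemma swap_sum (n : ℕ) (G : ℕ → ℕ → ℂ) :
    ∑ a ∈ Finset.range (n+1), ∑ b ∈ Finset.range (n-a+1), G a b
      = ∑ b ∈ Finset.range (n+1), ∑ a ∈ Finset.range (n-b+1), G a b := by
  induction n generalizing G with
  | zero => simp
  | succ n ih =>
    have peel : ∀ (H : ℕ → ℕ → ℂ),
        ∑ a ∈ Finset.range (n+1+1), ∑ b ∈ Finset.range (n+1-a+1), H a b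
        = (∑ a ∈ Finset.range (n+1), ∑ b ∈ Finset.range (n-a+1), H a b)
          + ∑ a ∈ Finset.range (n+1+1), H a (n+1-a) := by
      intro H
      rw [Finset.sum_range_succ (fun a => ∑ b ∈ Finset.range (n+1-a+1), H a b) (n+1)]
      rw [Finset.sum_range_succ (fun a => H a (n+1-a)) (n+1)]
      rw [show n+1-(n+1) = 0 from by omega, Finset.sum_range_one]
      have inner : ∑ a ∈ Finset.range (n+1), ∑ b ∈ Finset.range (n+1-a+1), H a b
          = ∑ a ∈ Finset.range (n+1), (∑ b ∈ Finset.range (n-a+1), H a b + H a (n+1-a)) := by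
        apply Finset.sum_congr rfl
        intro a ha
        have ha' : a ≤ n := by have := Finset.mem_range.mp ha; omega
        rw [show n+1-a+1 = (n-a+1)+1 from by omega, Finset.sum_range_succ,
          show n-a+1 = n+1-a from by omega]
      rw [inner, Finset.sum_add_distrib]
      ring
    rw [peel G, peel (fun x y => G y x), ih G]
    congr 1
    have hrefl : ∑ a ∈ Finset.range (n+1+1), G a (n+1-a)
        = ∑ a ∈ Finset.range (n+1+1), (fun x => G (n+1-x) x) (n+1+1-1-a) := by
      apply Finset.sum_congr rfl
      intro a ha
      have ha' : a ≤ n+1 := by have := Finset.mem_range.mp ha; omega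
      simp only
      rw [show n+1+1-1-a = n+1-a from by omega, show n+1-(n+1-a) = a from by omega]
    rw [hrefl]
    exact Finset.sum_range_reflect (fun x => G (n+1-x) x) (n+1+1)

end CoeffId

/-- For `0 < |q| < 1` and every `n ≥ 0`,
`Σ_{j=0}^{n} q^{n-j}/((q²;q²)_{n-j} (q;q²)_{j+1})
  = Σ_{j=0}^{n} (-1)^j q^{j(j+1)}/((q;q)_{n-j} (q²;q²)_j (1-q^{2j+1}))`. -/
theorem coefficient_identity (q : ℂ) (h0 : 0 < ‖q‖) (h1 : ‖q‖ < 1) :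
    ∀ n : ℕ,
      ∑ j ∈ Finset.range (n + 1),
          q ^ (n - j) / (qPoch (q ^ 2) (q ^ 2) (n - j) * qPoch q (q ^ 2) (j + 1)) =
        ∑ j ∈ Finset.range (n + 1),
          (-1 : ℂ) ^ j * q ^ (j * (j + 1)) /
            (qPoch q q (n - j) * qPoch (q ^ 2) (q ^ 2) j * (1 - q ^ (2 * j + 1))) := by
  intro n
  have step1 : ∀ j ∈ Finset.range (n+1),
      q ^ (n - j) / (qPoch (q ^ 2) (q ^ 2) (n - j) * qPoch q (q ^ 2) (j + 1))
      = ∑ i ∈ Finset.range (j+1), q^(n-j) * CoeffId.u q (n-j) * (CoeffId.kk q i * CoeffId.u q (j-i)) := by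
    intro j hj
    rw [div_eq_mul_inv, mul_inv, ← CoeffId.u, ← CoeffId.W_eq h1 j, CoeffId.WW,
      Finset.mul_sum, Finset.mul_sum]
    exact Finset.sum_congr rfl (fun i _ => by ring)
  have step2 : ∀ j ∈ Finset.range (n+1),
      (-1 : ℂ) ^ j * q ^ (j * (j + 1)) /
          (qPoch q q (n - j) * qPoch (q ^ 2) (q ^ 2) j * (1 - q ^ (2 * j + 1)))
      = ∑ m ∈ Finset.range ((n-j)+1), CoeffId.kk q j * (q^m * CoeffId.u q m * CoeffId.u q (n-j-m)) := by
    intro j hj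
    have key : (-1 : ℂ) ^ j * q ^ (j * (j + 1)) /
          (qPoch q q (n - j) * qPoch (q ^ 2) (q ^ 2) j * (1 - q ^ (2 * j + 1)))
        = CoeffId.kk q j * CoeffId.SS q (n-j) := by
      rw [CoeffId.S_eq h1, CoeffId.kk, div_eq_mul_inv]
      simp only [mul_inv]
      ring
    rw [key, CoeffId.SS, Finset.mul_sum]
  rw [Finset.sum_congr rfl step1, Finset.sum_congr rfl step2]
  have lrefl : ∑ j ∈ Finset.range (n+1), ∑ i ∈ Finset.range (j+1),
        q^(n-j) * CoeffId.u q (n-j) * (CoeffId.kk q i * CoeffId.u q (j-i))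
      = ∑ j ∈ Finset.range (n+1), ∑ i ∈ Finset.range ((n-j)+1),
        q^j * CoeffId.u q j * (CoeffId.kk q i * CoeffId.u q ((n-j)-i)) := by
    rw [← Finset.sum_range_reflect]
    apply Finset.sum_congr rfl
    intro j hj
    have hj' : j ≤ n := by have := Finset.mem_range.mp hj; omega
    rw [show n+1-1-j = n-j from by omega, show n-(n-j) = j from by omega]
  rw [lrefl]
  rw [show (∑ j ∈ Finset.range (n+1), ∑ i ∈ Finset.range ((n-j)+1),
        q^j * CoeffId.u q j * (CoeffId.kk q i * CoeffId.u q ((n-j)-i)))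
      = ∑ b ∈ Finset.range (n+1), ∑ a ∈ Finset.range (n-b+1),
        (fun a b => CoeffId.kk q a * (q^b * CoeffId.u q b * CoeffId.u q (n-a-b))) a b from by
    apply Finset.sum_congr rfl
    intro j hj
    apply Finset.sum_congr rfl
    intro i hi
    show _ = CoeffId.kk q i * (q ^ j * CoeffId.u q j * CoeffId.u q (n - i - j))
    rw [show n-i-j = n-j-i from by omega]
    ring]
  rw [← CoeffId.swap_sum n (fun a b => CoeffId.kk q a * (q^b * CoeffId.u q b * CoeffId.u q (n-a-b)))]
end

section
/- Let w ∈ ℂ with 0 < |w| < 1 and set q = w². Then 2·Σ_{n≥0} Σ_{j=0}^{n} (-1)^j q^{n²+n+j(j+1)/2} / ((-q;q)_n · (q;q)_{n-j} · (q;q)_j · (1 - q^{2j+1})) = A(w) + A(-w), where A(x) = Σ_{n≥0} x^{2n²+2n} / (-x;x)_{2n+1}. (Here j(j+1)/2 is an integer, so q^{j(j+1)/2} = w^{j(j+1)} is well defined.) -/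
/-- The mock theta function `A(x) = Σ_{n≥0} x^{2n²+2n}/(-x;x)_{2n+1}`. -/
noncomputable def mockA (x : ℂ) : ℂ :=
  ∑' n : ℕ, x ^ (2 * n ^ 2 + 2 * n) / qPoch (-x) x (2 * n + 1)


open Finset

lemma qPoch_succ (x q : ℂ) (n : ℕ) :
    qPoch x q (n + 1) = qPoch x q n * (1 - x * q ^ n) := Finset.prod_range_succ _ _

lemma one_sub_ne (z : ℂ) (h : ‖z‖ < 1) : (1 : ℂ) - z ≠ 0 := by
  intro hz
  have : z = 1 := by linear_combination -hz
  simp [this] at h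

lemma abs_mul_pow_lt (x q : ℂ) (hx : ‖x‖ < 1) (hq : ‖q‖ ≤ 1) (i : ℕ) :
    ‖x * q ^ i‖ < 1 := by
  have h1 : ‖x * q ^ i‖ = ‖x‖ * ‖q‖ ^ i := by
    simp [norm_mul, norm_pow]
  rw [h1]
  calc ‖x‖ * ‖q‖ ^ i ≤ ‖x‖ * 1 := by
        apply mul_le_mul_of_nonneg_left _ (norm_nonneg x)
        exact pow_le_one₀ (norm_nonneg q) hq
    _ < 1 := by simpa using hx

lemma qPoch_ne_zero (x q : ℂ) (hx : ‖x‖ < 1) (hq : ‖q‖ ≤ 1) (n : ℕ) :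
    qPoch x q n ≠ 0 := by
  apply Finset.prod_ne_zero_iff.2
  intro i _
  exact one_sub_ne _ (abs_mul_pow_lt x q hx hq i)

lemma qPoch_qq_succ (q : ℂ) (n : ℕ) :
    qPoch q q (n + 1) = qPoch q q n * (1 - q ^ (n + 1)) := by
  rw [qPoch_succ]; ring_nf

/-- summand of the Gauss binomial sum -/
noncomputable def Tg (w x : ℂ) (m j : ℕ) : ℂ :=
  (-1 : ℂ) ^ j * w ^ (j * (j - 1)) * x ^ j /
    (qPoch (w ^ 2) (w ^ 2) j * qPoch (w ^ 2) (w ^ 2) (m - j))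

lemma nat_e1 (m : ℕ) : (m + 1) * m = m * (m - 1) + 2 * m := by
  cases m with
  | zero => rfl
  | succ p => simp only [Nat.add_sub_cancel]; ring

section Gauss

variable (w : ℂ) (hf : ∀ k : ℕ, (1 : ℂ) - (w ^ 2) ^ (k + 1) ≠ 0)

include hf

lemma hP_of_hf : ∀ m : ℕ, qPoch (w ^ 2) (w ^ 2) m ≠ 0 := by
  intro m
  apply Finset.prod_ne_zero_iff.2
  intro i _
  have h : w ^ 2 * (w ^ 2) ^ i = (w ^ 2) ^ (i + 1) := by ring
  rw [h]; exact hf i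

lemma Tg_split (x : ℂ) (n j : ℕ) (hj : j ≤ n) :
    (1 - (w ^ 2) ^ (n + 1)) * Tg w x (n + 1) j
      = Tg w x n j - x * (w ^ 2) ^ n * (if j = 0 then 0 else Tg w x n (j - 1)) := by
  have hP := hP_of_hf w hf
  cases j with
  | zero =>
      have h0 : qPoch (w ^ 2) (w ^ 2) 0 = 1 := by simp [qPoch]
      simp only [Tg, Nat.sub_zero, Nat.zero_mul, pow_zero, h0, one_mul, mul_one,
        if_pos rfl, if_true, mul_zero, sub_zero]
      rw [qPoch_qq_succ, mul_one_div, mul_comm (qPoch (w ^ 2) (w ^ 2) n) _, ← div_div,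
        div_self (hf n)]
  | succ m =>
      have hm : m + 1 ≤ n := hj
      obtain ⟨k, hk⟩ : ∃ k, n = m + 1 + k := ⟨n - (m + 1), by omega⟩
      subst hk
      simp only [if_neg (Nat.succ_ne_zero m), Nat.succ_sub_one, Tg]
      have s1 : m + 1 + k + 1 - (m + 1) = k + 1 := by omega
      have s2 : m + 1 + k - (m + 1) = k := by omega
      have s3 : m + 1 + k - m = k + 1 := by omega
      rw [s1, s2, s3]
      have e1 : (m + 1) * m = m * (m - 1) + 2 * m := nat_e1 m
      have e2 : w ^ ((m + 1) * m) = w ^ (m * (m - 1)) * (w ^ 2) ^ m := by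
        rw [e1, pow_add, pow_mul w 2 m]
      have e3 : (w ^ 2) ^ (m + 1 + k + 1) = (w ^ 2) ^ (m + 1) * (w ^ 2) ^ (k + 1) := by
        rw [← pow_add]; ring_nf
      have e4 : (w ^ 2) ^ (m + 1 + k) = (w ^ 2) ^ m * (w ^ 2) ^ (k + 1) := by
        rw [← pow_add]; ring_nf
      rw [e2, e3, e4, qPoch_qq_succ (w ^ 2) m, qPoch_qq_succ (w ^ 2) k]
      set u := (w ^ 2) ^ (m + 1) with hu
      set v := (w ^ 2) ^ (k + 1) with hv
      have h1 : (1 : ℂ) - u ≠ 0 := hf m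
      have h2 : (1 : ℂ) - v ≠ 0 := hf k
      field_simp [hP m, hP k]
      ring

lemma gauss (x : ℂ) : ∀ n : ℕ,
    ∑ j ∈ Finset.range (n + 1), Tg w x n j
      = (∏ i ∈ Finset.range n, (1 - x * (w ^ 2) ^ i)) / qPoch (w ^ 2) (w ^ 2) n := by
  have hP := hP_of_hf w hf
  intro n
  induction n with
  | zero => simp [Tg, qPoch]
  | succ n ih =>
      have hlast : (1 - (w ^ 2) ^ (n + 1)) * Tg w x (n + 1) (n + 1)
          = -(x * (w ^ 2) ^ n) * Tg w x n n := by
        simp only [Tg, Nat.sub_self, Nat.add_sub_cancel]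
        have h0 : qPoch (w ^ 2) (w ^ 2) 0 = 1 := by simp [qPoch]
        rw [h0]
        have e1 : (n + 1) * n = n * (n - 1) + 2 * n := nat_e1 n
        have e2 : w ^ ((n + 1) * n) = w ^ (n * (n - 1)) * (w ^ 2) ^ n := by
          rw [e1, pow_add, pow_mul w 2 n]
        rw [e2, qPoch_qq_succ (w ^ 2) n]
        set u := (w ^ 2) ^ (n + 1) with hu
        have h1 : (1 : ℂ) - u ≠ 0 := hf n
        field_simp [hP n]
        ring
      have h1 : (1 - (w ^ 2) ^ (n + 1)) * ∑ j ∈ Finset.range (n + 2), Tg w x (n + 1) j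
          = (1 - x * (w ^ 2) ^ n) * ∑ j ∈ Finset.range (n + 1), Tg w x n j := by
        rw [Finset.mul_sum, Finset.sum_range_succ, hlast]
        have hmain : ∑ j ∈ Finset.range (n + 1), (1 - (w ^ 2) ^ (n + 1)) * Tg w x (n + 1) j
            = ∑ j ∈ Finset.range (n + 1),
                (Tg w x n j - x * (w ^ 2) ^ n * (if j = 0 then 0 else Tg w x n (j - 1))) := by
          apply Finset.sum_congr rfl
          intro j hjr
          exact Tg_split w hf x n j (by
            have := Finset.mem_range.1 hjr; omega)
        rw [hmain, Finset.sum_sub_distrib]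
        have hshift : ∑ j ∈ Finset.range (n + 1),
            (x * (w ^ 2) ^ n * (if j = 0 then 0 else Tg w x n (j - 1)))
            = x * (w ^ 2) ^ n * ∑ j ∈ Finset.range n, Tg w x n j := by
          rw [← Finset.mul_sum]
          congr 1
          rw [Finset.sum_range_succ']
          simp
        rw [hshift]
        have hpeel : ∑ j ∈ Finset.range (n + 1), Tg w x n j
            = ∑ j ∈ Finset.range n, Tg w x n j + Tg w x n n := Finset.sum_range_succ _ _
        rw [hpeel]
        ring
      rw [ih] at h1
      rw [Finset.prod_range_succ, qPoch_qq_succ]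
      have hne : qPoch (w ^ 2) (w ^ 2) n * (1 - (w ^ 2) ^ (n + 1)) ≠ 0 :=
        mul_ne_zero (hP n) (hf n)
      rw [eq_div_iff hne]
      have hPn := hP n
      field_simp at h1
      linear_combination h1

end Gauss

lemma nat_e1' (j : ℕ) : j * (j + 1) = j * (j - 1) + 2 * j := by
  rw [mul_comm j (j + 1)]; exact nat_e1 j

lemma aux_zero (w : ℂ) (hf : ∀ k : ℕ, (1 : ℂ) - (w ^ 2) ^ (k + 1) ≠ 0) (n : ℕ) :
    ∑ j ∈ Finset.range (n + 2), (-1 : ℂ) ^ j * w ^ (j * (j + 1)) * (w ^ 2) ^ (n + 1 - j) /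
      (qPoch (w ^ 2) (w ^ 2) j * qPoch (w ^ 2) (w ^ 2) (n + 1 - j)) = 0 := by
  have hstep : ∀ j ∈ Finset.range (n + 2),
      (-1 : ℂ) ^ j * w ^ (j * (j + 1)) * (w ^ 2) ^ (n + 1 - j) /
        (qPoch (w ^ 2) (w ^ 2) j * qPoch (w ^ 2) (w ^ 2) (n + 1 - j))
      = (w ^ 2) ^ (n + 1) * Tg w 1 (n + 1) j := by
    intro j hj
    have hj' : j ≤ n + 1 := by have := Finset.mem_range.1 hj; omega
    obtain ⟨k, hk⟩ : ∃ k, n + 1 = j + k := ⟨n + 1 - j, by omega⟩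
    rw [hk]
    simp only [Tg, Nat.add_sub_cancel_left, one_pow]
    have e : j * (j + 1) = j * (j - 1) + 2 * j := nat_e1' j
    rw [e, pow_add, pow_mul w 2 j, pow_add (w ^ 2) j k]
    ring
  rw [Finset.sum_congr rfl hstep, ← Finset.mul_sum, gauss w hf 1 (n + 1)]
  have hz : ∏ i ∈ Finset.range (n + 1), (1 - 1 * (w ^ 2) ^ i) = 0 :=
    Finset.prod_eq_zero (Finset.mem_range.2 (Nat.succ_pos n)) (by simp)
  rw [hz]
  simp

lemma frac_split (E Pj Pk u a t : ℂ) (hPj : Pj ≠ 0) (hPk : Pk ≠ 0)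
    (h1 : (1 : ℂ) - u ≠ 0) (h2 : (1 : ℂ) - t * a ≠ 0) (h3 : (1 : ℂ) - t * (a * u) ≠ 0) :
    E / (Pj * (Pk * (1 - u)) * (1 - t * a)) =
      E / (Pj * Pk * (1 - t * a)) * (1 - t * (a * u))⁻¹
        + E * u / (Pj * (Pk * (1 - u))) * (1 - t * (a * u))⁻¹ := by
  have hD1 : Pj * (Pk * (1 - u)) ≠ 0 := mul_ne_zero hPj (mul_ne_zero hPk h1)
  have hD2 : Pj * Pk * (1 - t * a) ≠ 0 := mul_ne_zero (mul_ne_zero hPj hPk) h2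
  rw [← add_mul, div_add_div _ _ hD2 hD1, ← div_eq_mul_inv, div_div,
    div_eq_div_iff (mul_ne_zero hD1 h2) (mul_ne_zero (mul_ne_zero hD2 hD1) h3)]
  ring

lemma pf (w t : ℂ) (hf : ∀ k : ℕ, (1 : ℂ) - (w ^ 2) ^ (k + 1) ≠ 0)
    (hd : ∀ j : ℕ, (1 : ℂ) - t * w ^ (2 * j + 1) ≠ 0) : ∀ n : ℕ,
    ∑ j ∈ Finset.range (n + 1), (-1 : ℂ) ^ j * w ^ (j * (j + 1)) /
        (qPoch (w ^ 2) (w ^ 2) j * qPoch (w ^ 2) (w ^ 2) (n - j) * (1 - t * w ^ (2 * j + 1)))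
      = (∏ j ∈ Finset.range (n + 1), (1 - t * w ^ (2 * j + 1)))⁻¹ := by
  have hP := hP_of_hf w hf
  intro n
  induction n with
  | zero =>
      have h0 : qPoch (w ^ 2) (w ^ 2) 0 = 1 := by simp [qPoch]
      simp [h0, Finset.prod_range_one, one_div]
  | succ n ih =>
      have hsplit : ∀ j ∈ Finset.range (n + 1),
          (-1 : ℂ) ^ j * w ^ (j * (j + 1)) /
            (qPoch (w ^ 2) (w ^ 2) j * qPoch (w ^ 2) (w ^ 2) (n + 1 - j) *
              (1 - t * w ^ (2 * j + 1)))
          = (-1 : ℂ) ^ j * w ^ (j * (j + 1)) /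
              (qPoch (w ^ 2) (w ^ 2) j * qPoch (w ^ 2) (w ^ 2) (n - j) *
                (1 - t * w ^ (2 * j + 1))) * (1 - t * w ^ (2 * (n + 1) + 1))⁻¹
            + ((-1 : ℂ) ^ j * w ^ (j * (j + 1)) * (w ^ 2) ^ (n + 1 - j) /
                (qPoch (w ^ 2) (w ^ 2) j * qPoch (w ^ 2) (w ^ 2) (n + 1 - j)))
              * (1 - t * w ^ (2 * (n + 1) + 1))⁻¹ := by
        intro j hj
        have hj' : j ≤ n := by have := Finset.mem_range.1 hj; omega
        obtain ⟨k, hk⟩ : ∃ k, n = j + k := ⟨n - j, by omega⟩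
        subst hk
        have s1 : j + k + 1 - j = k + 1 := by omega
        have s2 : j + k - j = k := by omega
        rw [s1, s2]
        have eb : (w : ℂ) ^ (2 * (j + k + 1) + 1) = w ^ (2 * j + 1) * (w ^ 2) ^ (k + 1) := by
          rw [show 2 * (j + k + 1) + 1 = (2 * j + 1) + 2 * (k + 1) by ring, pow_add,
            pow_mul w 2 (k + 1)]
        rw [eb, qPoch_qq_succ (w ^ 2) k]
        have h3 : (1 : ℂ) - t * (w ^ (2 * j + 1) * (w ^ 2) ^ (k + 1)) ≠ 0 := by
          have := hd (j + k + 1); rwa [eb] at this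
        exact frac_split ((-1 : ℂ) ^ j * w ^ (j * (j + 1))) (qPoch (w ^ 2) (w ^ 2) j)
          (qPoch (w ^ 2) (w ^ 2) k) ((w ^ 2) ^ (k + 1)) (w ^ (2 * j + 1)) t
          (hP j) (hP k) (hf k) (hd j) h3
      have hlast : (-1 : ℂ) ^ (n + 1) * w ^ ((n + 1) * (n + 1 + 1)) /
            (qPoch (w ^ 2) (w ^ 2) (n + 1) * qPoch (w ^ 2) (w ^ 2) (n + 1 - (n + 1)) *
              (1 - t * w ^ (2 * (n + 1) + 1)))
          = ((-1 : ℂ) ^ (n + 1) * w ^ ((n + 1) * (n + 1 + 1)) * (w ^ 2) ^ (n + 1 - (n + 1)) /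
              (qPoch (w ^ 2) (w ^ 2) (n + 1) * qPoch (w ^ 2) (w ^ 2) (n + 1 - (n + 1))))
            * (1 - t * w ^ (2 * (n + 1) + 1))⁻¹ := by
        rw [Nat.sub_self, pow_zero, mul_one, ← div_div, div_eq_mul_inv]
      rw [Finset.sum_range_succ, Finset.sum_congr rfl hsplit, Finset.sum_add_distrib,
        ← Finset.sum_mul, ← Finset.sum_mul, ih, hlast, add_assoc, ← add_mul,
        ← Finset.sum_range_succ (fun j => (-1 : ℂ) ^ j * w ^ (j * (j + 1)) * (w ^ 2) ^ (n + 1 - j) /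
          (qPoch (w ^ 2) (w ^ 2) j * qPoch (w ^ 2) (w ^ 2) (n + 1 - j))) (n + 1),
        aux_zero w hf n, zero_mul, add_zero, Finset.prod_range_succ, mul_inv,
        Finset.prod_range_succ, mul_inv, Finset.prod_range_succ, mul_inv]

lemma split_plus (w : ℂ) : ∀ n : ℕ,
    qPoch (-w) w (2 * n + 1)
      = qPoch (-(w ^ 2)) (w ^ 2) n * ∏ j ∈ Finset.range (n + 1), (1 + w ^ (2 * j + 1)) := by
  intro n
  induction n with
  | zero => simp [qPoch]
  | succ n ih =>
      have h : 2 * (n + 1) + 1 = 2 * n + 1 + 1 + 1 := by ring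
      rw [h, qPoch_succ, qPoch_succ, ih, qPoch_succ,
        Finset.prod_range_succ (fun j => 1 + w ^ (2 * j + 1)) (n + 1)]
      ring
lemma split_minus (w : ℂ) : ∀ n : ℕ,
    qPoch w (-w) (2 * n + 1)
      = qPoch (-(w ^ 2)) (w ^ 2) n * ∏ j ∈ Finset.range (n + 1), (1 - w ^ (2 * j + 1)) := by
  intro n
  induction n with
  | zero => simp [qPoch]
  | succ n ih =>
      have h : 2 * (n + 1) + 1 = 2 * n + 1 + 1 + 1 := by ring
      rw [h, qPoch_succ, qPoch_succ, ih, qPoch_succ,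
        Finset.prod_range_succ (fun j => 1 - w ^ (2 * j + 1)) (n + 1)]
      have o1 : (-w) ^ (2 * n + 1) = -(w ^ (2 * n + 1)) := Odd.neg_pow ⟨n, by ring⟩ w
      have o2 : (-w) ^ (2 * n + 1 + 1) = w ^ (2 * n + 1 + 1) := Even.neg_pow ⟨n + 1, by ring⟩ w
      rw [o1, o2]
      ring

lemma one_add_ne (z : ℂ) (h : ‖z‖ < 1) : (1 : ℂ) + z ≠ 0 := by
  intro hz
  have : z = -1 := by linear_combination hz
  simp [this] at h

lemma frac2 (a D x : ℂ) (hD : D ≠ 0) (h1 : (1 : ℂ) - x ≠ 0) (h2 : (1 : ℂ) + x ≠ 0) :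
    a / (D * (1 - 1 * x)) + a / (D * (1 - -1 * x)) = 2 * (a / (D * (1 - x ^ 2))) := by
  have hx2 : (1 : ℂ) - x ^ 2 ≠ 0 := by
    intro hc
    rcases mul_eq_zero.1 (show ((1 : ℂ) - x) * (1 + x) = 0 by linear_combination hc) with h | h
    exacts [h1 h, h2 h]
  rw [show (1 : ℂ) - 1 * x = 1 - x by ring, show (1 : ℂ) - -1 * x = 1 + x by ring]
  field_simp
  ring

lemma frac3 (W Pn A B : ℂ) (hPn : Pn ≠ 0) (hA : A ≠ 0) (hB : B ≠ 0) :
    W / Pn * (A⁻¹ + B⁻¹) = W / (Pn * B) + W / (Pn * A) := by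
  field_simp
  ring

lemma summA (x : ℂ) (hx : ‖x‖ < 1) :
    Summable (fun n : ℕ => x ^ (2 * n ^ 2 + 2 * n) / qPoch (-x) x (2 * n + 1)) := by
  set f : ℕ → ℂ := fun n => x ^ (2 * n ^ 2 + 2 * n) / qPoch (-x) x (2 * n + 1) with hf
  set c : ℝ := ‖x‖ with hc
  have hc0 : 0 ≤ c := norm_nonneg x
  have hd0 : 0 < 1 - c := by linarith
  have key : ∀ n : ℕ, f (n + 1)
      = f n * (x ^ (4 * n + 4) / ((1 - -x * x ^ (2 * n + 1)) * (1 - -x * x ^ (2 * n + 1 + 1)))) := by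
    intro n
    have hq : qPoch (-x) x (2 * (n + 1) + 1)
        = qPoch (-x) x (2 * n + 1) * ((1 - -x * x ^ (2 * n + 1)) * (1 - -x * x ^ (2 * n + 1 + 1))) := by
      rw [show 2 * (n + 1) + 1 = 2 * n + 1 + 1 + 1 by ring, qPoch_succ, qPoch_succ]
      ring
    simp only [hf]
    rw [show 2 * (n + 1) ^ 2 + 2 * (n + 1) = (2 * n ^ 2 + 2 * n) + (4 * n + 4) by ring,
      pow_add, hq, div_mul_div_comm]
  have hlow : ∀ k : ℕ, 1 - c ≤ ‖1 - -x * x ^ k‖ := by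
    intro k
    have e : (1 : ℂ) - -x * x ^ k = 1 + x ^ (k + 1) := by ring
    rw [e]
    have h1 : (1 : ℝ) ≤ ‖1 + x ^ (k + 1)‖ + ‖x ^ (k + 1)‖ := by
      have := norm_add_le (1 + x ^ (k + 1)) (-(x ^ (k + 1)))
      simpa using this
    have h2 : ‖x ^ (k + 1)‖ ≤ c := by
      rw [norm_pow]
      calc c ^ (k + 1) ≤ c ^ 1 := pow_le_pow_of_le_one hc0 hx.le (by omega)
        _ = c := pow_one _
    linarith
  apply summable_of_ratio_norm_eventually_le (r := 1 / 2) (by norm_num)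
  have hev : ∀ᶠ n : ℕ in Filter.atTop, c ^ n < 1 / 2 * (1 - c) ^ 2 := by
    have hten := tendsto_pow_atTop_nhds_zero_of_lt_one hc0 hx
    exact hten.eventually (gt_mem_nhds (by positivity))
  filter_upwards [hev] with n hn
  rw [key n, norm_mul]
  have hb : ‖x ^ (4 * n + 4) / ((1 - -x * x ^ (2 * n + 1)) * (1 - -x * x ^ (2 * n + 1 + 1)))‖
      ≤ 1 / 2 := by
    rw [norm_div, norm_mul]
    have hA := hlow (2 * n + 1)
    have hB := hlow (2 * n + 1 + 1)
    have hnum : ‖x ^ (4 * n + 4)‖ ≤ c ^ n := by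
      rw [norm_pow]
      exact pow_le_pow_of_le_one hc0 hx.le (by omega)
    have hden : (1 - c) ^ 2 ≤ ‖1 - -x * x ^ (2 * n + 1)‖ * ‖1 - -x * x ^ (2 * n + 1 + 1)‖ := by
      rw [sq]
      exact mul_le_mul hA hB hd0.le (norm_nonneg _)
    have hdenpos : (0 : ℝ) < ‖1 - -x * x ^ (2 * n + 1)‖ * ‖1 - -x * x ^ (2 * n + 1 + 1)‖ :=
      lt_of_lt_of_le (by positivity) hden
    rw [div_le_iff₀ hdenpos]
    calc ‖x ^ (4 * n + 4)‖ ≤ c ^ n := hnum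
      _ ≤ 1 / 2 * (1 - c) ^ 2 := hn.le
      _ ≤ 1 / 2 * (‖1 - -x * x ^ (2 * n + 1)‖ * ‖1 - -x * x ^ (2 * n + 1 + 1)‖) := by
          nlinarith
  calc ‖f n‖ * ‖x ^ (4 * n + 4) / ((1 - -x * x ^ (2 * n + 1)) * (1 - -x * x ^ (2 * n + 1 + 1)))‖
      ≤ ‖f n‖ * (1 / 2) := mul_le_mul_of_nonneg_left hb (norm_nonneg _)
    _ = 1 / 2 * ‖f n‖ := by ring

lemma habs2 (w : ℂ) (hw : ‖w‖ < 1) : ‖w ^ 2‖ < 1 := by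
  rw [norm_pow]
  exact pow_lt_one₀ (norm_nonneg w) hw two_ne_zero

lemma hf_of (w : ℂ) (hw : ‖w‖ < 1) (k : ℕ) : (1 : ℂ) - (w ^ 2) ^ (k + 1) ≠ 0 :=
  one_sub_ne _ (by
    rw [show ((w ^ 2 : ℂ)) ^ (k + 1) = w ^ 2 * (w ^ 2) ^ k by ring]
    exact abs_mul_pow_lt _ _ (habs2 w hw) (habs2 w hw).le k)

lemma habsw (w : ℂ) (hw : ‖w‖ < 1) (m : ℕ) : ‖w ^ (2 * m + 1)‖ < 1 := by
  rw [show (w : ℂ) ^ (2 * m + 1) = w * w ^ (2 * m) by ring]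
  exact abs_mul_pow_lt w w hw hw.le (2 * m)

lemma keyfin (w : ℂ) (hw : ‖w‖ < 1) (n : ℕ) :
    2 * ∑ j ∈ Finset.range (n + 1), (-1 : ℂ) ^ j * w ^ (j * (j + 1)) /
        (qPoch (w ^ 2) (w ^ 2) j * qPoch (w ^ 2) (w ^ 2) (n - j) * (1 - (w ^ 2) ^ (2 * j + 1)))
      = (∏ j ∈ Finset.range (n + 1), (1 - w ^ (2 * j + 1)))⁻¹
        + (∏ j ∈ Finset.range (n + 1), (1 + w ^ (2 * j + 1)))⁻¹ := by
  have hf := hf_of w hw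
  have hP := hP_of_hf w hf
  have hd1 : ∀ j : ℕ, (1 : ℂ) - w ^ (2 * j + 1) ≠ 0 := fun j => one_sub_ne _ (habsw w hw j)
  have hd2 : ∀ j : ℕ, (1 : ℂ) + w ^ (2 * j + 1) ≠ 0 := fun j => one_add_ne _ (habsw w hw j)
  have pf1 := pf w 1 hf (fun j => by simpa using hd1 j) n
  have pf2 := pf w (-1) hf (fun j => by simpa using hd2 j) n
  have e1 : ∏ j ∈ Finset.range (n + 1), ((1 : ℂ) - 1 * w ^ (2 * j + 1))
      = ∏ j ∈ Finset.range (n + 1), (1 - w ^ (2 * j + 1)) := by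
    apply Finset.prod_congr rfl; intro j _; ring
  have e2 : ∏ j ∈ Finset.range (n + 1), ((1 : ℂ) - -1 * w ^ (2 * j + 1))
      = ∏ j ∈ Finset.range (n + 1), (1 + w ^ (2 * j + 1)) := by
    apply Finset.prod_congr rfl; intro j _; ring
  rw [e1] at pf1
  rw [e2] at pf2
  rw [← pf1, ← pf2, ← Finset.sum_add_distrib, Finset.mul_sum]
  apply Finset.sum_congr rfl
  intro j _
  have e3 : ((w : ℂ) ^ 2) ^ (2 * j + 1) = (w ^ (2 * j + 1)) ^ 2 := by
    rw [← pow_mul, ← pow_mul, Nat.mul_comm]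
  rw [e3]
  exact (frac2 ((-1 : ℂ) ^ j * w ^ (j * (j + 1)))
    (qPoch (w ^ 2) (w ^ 2) j * qPoch (w ^ 2) (w ^ 2) (n - j)) (w ^ (2 * j + 1))
    (mul_ne_zero (hP j) (hP (n - j))) (hd1 j) (hd2 j)).symm

lemma termwise (w : ℂ) (hw : ‖w‖ < 1) (n : ℕ) :
    2 * ∑ j ∈ Finset.range (n + 1),
        (-1 : ℂ) ^ j * (w ^ 2) ^ (n ^ 2 + n) * w ^ (j * (j + 1)) /
          (qPoch (-(w ^ 2)) (w ^ 2) n * qPoch (w ^ 2) (w ^ 2) (n - j) * qPoch (w ^ 2) (w ^ 2) j *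
            (1 - (w ^ 2) ^ (2 * j + 1)))
      = w ^ (2 * n ^ 2 + 2 * n) / qPoch (-w) w (2 * n + 1)
        + (-w) ^ (2 * n ^ 2 + 2 * n) / qPoch (-(-w)) (-w) (2 * n + 1) := by
  have hf := hf_of w hw
  have hP := hP_of_hf w hf
  have hd1 : ∀ j : ℕ, (1 : ℂ) - w ^ (2 * j + 1) ≠ 0 := fun j => one_sub_ne _ (habsw w hw j)
  have hd2 : ∀ j : ℕ, (1 : ℂ) + w ^ (2 * j + 1) ≠ 0 := fun j => one_add_ne _ (habsw w hw j)
  have hPneg : qPoch (-(w ^ 2)) (w ^ 2) n ≠ 0 :=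
    qPoch_ne_zero _ _ (by rw [norm_neg]; exact habs2 w hw) (habs2 w hw).le n
  have hPm : (∏ j ∈ Finset.range (n + 1), ((1 : ℂ) - w ^ (2 * j + 1))) ≠ 0 :=
    Finset.prod_ne_zero_iff.2 fun j _ => hd1 j
  have hPp : (∏ j ∈ Finset.range (n + 1), ((1 : ℂ) + w ^ (2 * j + 1))) ≠ 0 :=
    Finset.prod_ne_zero_iff.2 fun j _ => hd2 j
  have hfac : ∀ j ∈ Finset.range (n + 1),
      (-1 : ℂ) ^ j * (w ^ 2) ^ (n ^ 2 + n) * w ^ (j * (j + 1)) /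
          (qPoch (-(w ^ 2)) (w ^ 2) n * qPoch (w ^ 2) (w ^ 2) (n - j) * qPoch (w ^ 2) (w ^ 2) j *
            (1 - (w ^ 2) ^ (2 * j + 1)))
        = ((w ^ 2) ^ (n ^ 2 + n) / qPoch (-(w ^ 2)) (w ^ 2) n) *
            ((-1 : ℂ) ^ j * w ^ (j * (j + 1)) /
              (qPoch (w ^ 2) (w ^ 2) j * qPoch (w ^ 2) (w ^ 2) (n - j) *
                (1 - (w ^ 2) ^ (2 * j + 1)))) := by
    intro j _
    rw [div_mul_div_comm]
    congr 1
    · ring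
    · ring
  rw [Finset.sum_congr rfl hfac, ← Finset.mul_sum,
    show (2 : ℂ) * ((w ^ 2) ^ (n ^ 2 + n) / qPoch (-(w ^ 2)) (w ^ 2) n *
        ∑ j ∈ Finset.range (n + 1), (-1 : ℂ) ^ j * w ^ (j * (j + 1)) /
          (qPoch (w ^ 2) (w ^ 2) j * qPoch (w ^ 2) (w ^ 2) (n - j) *
            (1 - (w ^ 2) ^ (2 * j + 1))))
      = (w ^ 2) ^ (n ^ 2 + n) / qPoch (-(w ^ 2)) (w ^ 2) n *
          (2 * ∑ j ∈ Finset.range (n + 1), (-1 : ℂ) ^ j * w ^ (j * (j + 1)) /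
            (qPoch (w ^ 2) (w ^ 2) j * qPoch (w ^ 2) (w ^ 2) (n - j) *
              (1 - (w ^ 2) ^ (2 * j + 1)))) from by ring,
    keyfin w hw n]
  rw [neg_neg, split_plus w n, split_minus w n]
  have epow : ((w : ℂ) ^ 2) ^ (n ^ 2 + n) = w ^ (2 * n ^ 2 + 2 * n) := by
    rw [← pow_mul]
    congr 1
    ring
  have enegpow : (-w : ℂ) ^ (2 * n ^ 2 + 2 * n) = w ^ (2 * n ^ 2 + 2 * n) :=
    Even.neg_pow ⟨n ^ 2 + n, by ring⟩ w
  rw [epow, enegpow]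
  exact frac3 (w ^ (2 * n ^ 2 + 2 * n)) (qPoch (-(w ^ 2)) (w ^ 2) n) _ _ hPneg hPm hPp

/-- Identity (2.13): with `q = w²`,
`2 Σ_{n≥0} Σ_{j=0}^{n} (-1)^j q^{n²+n+j(j+1)/2} / ((-q;q)_n (q;q)_{n-j} (q;q)_j (1-q^{2j+1}))
  = A(w) + A(-w)`, where `q^{j(j+1)/2} = w^{j(j+1)}`. -/
theorem double_sum_mock_A (w : ℂ) (h0 : 0 < ‖w‖) (h1 : ‖w‖ < 1)
    (q : ℂ) (hq : q = w ^ 2) :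
    2 * ∑' n : ℕ, ∑ j ∈ Finset.range (n + 1),
        (-1 : ℂ) ^ j * q ^ (n ^ 2 + n) * w ^ (j * (j + 1)) /
          (qPoch (-q) q n * qPoch q q (n - j) * qPoch q q j * (1 - q ^ (2 * j + 1))) =
      mockA w + mockA (-w) := by
  subst hq
  have h2 : ‖-w‖ < 1 := by rw [norm_neg]; exact h1
  rw [← tsum_mul_left, tsum_congr (fun n => termwise w h1 n),
    Summable.tsum_add (summA w h1) (summA (-w) h2)]
  rfl
end
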